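/- Uniform expansion from uniform bundle estimate: if a continuous one-dimensional bundle F over a compact invariant set satisfies that for every x there exists n(x) with ‖Df^{−n(x)}|_{F(x)}‖ < ν < 1, and the function x ↦ ‖Df^{−n}|_{F(x)}‖ is continuous for each n, then there exist C > 0 and σ ∈ (0,1) with ‖Df^{−n}|_{F(x)}‖ ≤ C σⁿ for all x and all n ≥ 0 (i.e. F is uniformly expanding). -/
import Mathlib


/-- Uniform expansion from a pointwise estimate: let `G x n = ‖Df^{-n}|_{F(x)}‖` be a
positive continuous multiplicative cocycle over `f` on a compact space, with the property
that every `x` has some `n ≥ 1` with `G x n < ν < 1`. Then there are `C > 0` and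
`σ ∈ (0,1)` with `G x n ≤ C σⁿ` for all `x` and `n ≥ 0` (uniform expansion of `F`). -/
theorem stmt19 {Λ : Type*} [MetricSpace Λ] [CompactSpace Λ] [Nonempty Λ]
    (f : Λ → Λ) (hf : Continuous f) (hbij : Function.Bijective f)
    (G : Λ → ℕ → ℝ)
    (hpos : ∀ x n, 0 < G x n)
    (hcont : ∀ n, Continuous fun x => G x n)
    (hcoc : ∀ x (n m : ℕ), G x (n + m) = G (f^[m] x) n * G x m)
    (ν : ℝ) (hν0 : 0 < ν) (hν1 : ν < 1)
    (h : ∀ x, ∃ n : ℕ, 1 ≤ n ∧ G x n < ν) :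
    ∃ C : ℝ, 0 < C ∧ ∃ σ : ℝ, 0 < σ ∧ σ < 1 ∧ ∀ x, ∀ n : ℕ, G x n ≤ C * σ ^ n := by
  classical
  choose nfun hn1 hnν using h
  obtain ⟨t, ht⟩ := IsCompact.elim_finite_subcover (isCompact_univ (X := Λ))
      (fun x : Λ => {y | G y (nfun x) < ν})
      (fun x => isOpen_lt (hcont _) continuous_const)
      (fun y _ => Set.mem_iUnion.mpr ⟨y, hnν y⟩)
  -- every point has a good time k with 1 ≤ k ≤ N
  set N : ℕ := t.sup nfun with hN
  have hkey : ∀ y : Λ, ∃ k : ℕ, 1 ≤ k ∧ k ≤ N ∧ G y k < ν := by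
    intro y
    have := ht (Set.mem_univ y)
    simp only [Set.mem_iUnion] at this
    obtain ⟨x, hx, hxy⟩ := this
    exact ⟨nfun x, hn1 x, Finset.le_sup hx, hxy⟩
  have hN1 : 1 ≤ N := by
    obtain ⟨k, hk1, hkN, _⟩ := hkey (Classical.arbitrary Λ)
    exact le_trans hk1 hkN
  have hNpos : (0 : ℝ) < N := by exact_mod_cast hN1
  -- a uniform upper bound M for G · n, n ≤ N
  have hB : ∀ n : ℕ, ∃ B : ℝ, ∀ x, G x n ≤ B := by
    intro n
    obtain ⟨x₀, -, hx₀⟩ := isCompact_univ.exists_isMaxOn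
      ⟨Classical.arbitrary Λ, Set.mem_univ _⟩ (hcont n).continuousOn
    exact ⟨G x₀ n, fun x => hx₀ (Set.mem_univ x)⟩
  choose B hBle using hB
  set M : ℝ := (Finset.range (N + 1)).sup' ⟨0, by simp⟩ B with hM
  have hMle : ∀ n, n ≤ N → ∀ x, G x n ≤ M := by
    intro n hn x
    exact le_trans (hBle n x)
      (Finset.le_sup' B (Finset.mem_range.mpr (Nat.lt_succ_of_le hn)))
  have hMpos : 0 < M := lt_of_lt_of_le (hpos (Classical.arbitrary Λ) 0)
    (hMle 0 (Nat.zero_le _) _)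
  set σ : ℝ := ν ^ ((N : ℝ)⁻¹) with hσ
  have hσ0 : 0 < σ := Real.rpow_pos_of_pos hν0 _
  have hσ1 : σ < 1 := Real.rpow_lt_one hν0.le hν1 (by positivity)
  have hσpow : ∀ k : ℕ, 1 ≤ k → k ≤ N → ν ≤ σ ^ k := by
    intro k hk1 hkN
    have : σ ^ k = ν ^ ((k : ℝ) * (N : ℝ)⁻¹) := by
      rw [hσ, ← Real.rpow_natCast (ν ^ ((N : ℝ)⁻¹)) k, ← Real.rpow_mul hν0.le,
        mul_comm]
    rw [this]
    have hle1 : (k : ℝ) * (N : ℝ)⁻¹ ≤ 1 := by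
      rw [mul_inv_le_iff₀ hNpos, one_mul]
      exact_mod_cast hkN
    calc ν = ν ^ (1 : ℝ) := (Real.rpow_one ν).symm
      _ ≤ ν ^ ((k : ℝ) * (N : ℝ)⁻¹) :=
        Real.rpow_le_rpow_of_exponent_ge hν0 hν1.le hle1
  set C : ℝ := M / σ ^ N with hC
  have hCpos : 0 < C := by positivity
  refine ⟨C, hCpos, σ, hσ0, hσ1, fun x n => ?_⟩
  induction n using Nat.strong_induction_on generalizing x with
  | _ n ih =>
    by_cases hle : n ≤ N
    · have h1 : G x n ≤ M := hMle n hle x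
      have h2 : C * σ ^ N = M := by
        rw [hC]; field_simp
      have h3 : σ ^ N ≤ σ ^ n := pow_le_pow_of_le_one hσ0.le hσ1.le hle
      calc G x n ≤ M := h1
        _ = C * σ ^ N := h2.symm
        _ ≤ C * σ ^ n := by
            exact mul_le_mul_of_nonneg_left h3 hCpos.le
    · push_neg at hle
      obtain ⟨k, hk1, hkN, hkν⟩ := hkey x
      have hkn : k ≤ n := le_trans hkN hle.le
      have hsub : n - k + k = n := Nat.sub_add_cancel hkn
      have hlt : n - k < n := Nat.sub_lt (lt_of_lt_of_le (by omega) hkn) hk1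
      have hco : G x n = G (f^[k] x) (n - k) * G x k := by
        conv_lhs => rw [← hsub]
        exact hcoc x (n - k) k
      have h1 : G (f^[k] x) (n - k) ≤ C * σ ^ (n - k) := ih (n - k) hlt _
      have h2 : G x k ≤ σ ^ k := le_trans hkν.le (hσpow k hk1 hkN)
      calc G x n = G (f^[k] x) (n - k) * G x k := hco
        _ ≤ (C * σ ^ (n - k)) * σ ^ k :=
          mul_le_mul h1 h2 (hpos x k).le (by positivity)
        _ = C * σ ^ n := by rw [mul_assoc, ← pow_add, hsub]
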